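/- For m>0 and K∈ℕ, K≥1, let μ_m^K be the probability measure on {(n_1,n_2)∈ℕ² : n_1+n_2=K} given by μ_m^K(n, K−n) = [Γ(m/2+n)Γ(m/2+K−n)/(n!(K−n)!)] / ∑_{l=0}^K Γ(m/2+l)Γ(m/2+K−l)/(l!(K−l)!). Then as m→0, μ_m^K converges to (1/2)(δ_{(K,0)} + δ_{(0,K)}): μ_m^K(η_1=0) → 1/2, μ_m^K(η_1=K) → 1/2, and μ_m^K(η_1=n) → 0 for every 0<n<K. -/

import Mathlib

open Filter Topology

/-- The unnormalized canonical weight of `(n, K−n)` for the SIP on two sites: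
`Γ(m/2+n)Γ(m/2+K−n)/(n!(K−n)!)`. -/
noncomputable def sip2Weight (m : ℝ) (K n : ℕ) : ℝ :=
  Real.Gamma (m / 2 + n) * Real.Gamma (m / 2 + (K - n : ℕ)) /
    (n.factorial * (K - n).factorial)

/-- The canonical measure of the SIP on two sites with `K` particles:
`μ_m^K(n, K−n) = sip2Weight m K n / ∑_{l=0}^K sip2Weight m K l`. -/
noncomputable def sip2Canonical (m : ℝ) (K n : ℕ) : ℝ :=
  sip2Weight m K n / ∑ l ∈ Finset.range (K + 1), sip2Weight m K l

lemma contAt_Gamma' {x : ℝ} (hx : 0 < x) : ContinuousAt Real.Gamma x := by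
  refine (Real.differentiableAt_Gamma ?_).continuousAt
  intro m h
  have : (0:ℝ) ≤ m := Nat.cast_nonneg m
  rw [h] at hx; linarith

lemma tendsto_Gamma_shift {a : ℝ} (ha : 0 < a) :
    Tendsto (fun m : ℝ => Real.Gamma (m / 2 + a)) (𝓝[>] 0) (𝓝 (Real.Gamma a)) := by
  have h : Tendsto (fun m : ℝ => m / 2 + a) (𝓝[>] (0:ℝ)) (𝓝 a) := by
    have hc : ContinuousAt (fun m : ℝ => m / 2 + a) 0 := by fun_prop
    simpa using hc.tendsto.mono_left nhdsWithin_le_nhds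
  exact ((contAt_Gamma' ha).tendsto).comp h

-- limit of m * weight at boundary n = 0
lemma tendsto_mw_zero (K : ℕ) (hK : 1 ≤ K) :
    Tendsto (fun m : ℝ => m * sip2Weight m K 0) (𝓝[>] 0)
      (𝓝 (2 * Real.Gamma K / K.factorial)) := by
  have hKpos : (0:ℝ) < K := by exact_mod_cast hK
  have heq : ∀ᶠ m in 𝓝[>] (0:ℝ), m * sip2Weight m K 0 =
      2 * Real.Gamma (m / 2 + 1) * Real.Gamma (m / 2 + K) / K.factorial := by
    filter_upwards [self_mem_nhdsWithin] with m hm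
    have hm' : (0:ℝ) < m := hm
    unfold sip2Weight
    rw [Real.Gamma_add_one (show m / 2 ≠ 0 by positivity)]
    simp only [Nat.cast_zero, add_zero, Nat.sub_zero, Nat.factorial_zero, Nat.cast_one, one_mul]
    ring
  rw [tendsto_congr' heq]
  have h1 := tendsto_Gamma_shift (show (0:ℝ) < 1 by norm_num)
  have h2 := tendsto_Gamma_shift hKpos
  have h3 : Tendsto (fun m : ℝ => 2 * Real.Gamma (m / 2 + 1) * Real.Gamma (m / 2 + K) / K.factorial)
      (𝓝[>] 0) (𝓝 (2 * Real.Gamma 1 * Real.Gamma K / K.factorial)) :=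
    ((h1.const_mul 2).mul h2).div_const _
  simpa [Real.Gamma_one] using h3

lemma tendsto_mw_K (K : ℕ) (hK : 1 ≤ K) :
    Tendsto (fun m : ℝ => m * sip2Weight m K K) (𝓝[>] 0)
      (𝓝 (2 * Real.Gamma K / K.factorial)) := by
  have h := tendsto_mw_zero K hK
  refine h.congr (fun m => ?_)
  simp only [sip2Weight, Nat.sub_self, Nat.sub_zero, Nat.cast_zero, add_zero,
    Nat.factorial_zero, Nat.cast_one]
  ring

lemma tendsto_mw_interior (K n : ℕ) (hn : 0 < n) (hnK : n < K) :
    Tendsto (fun m : ℝ => m * sip2Weight m K n) (𝓝[>] 0) (𝓝 0) := by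
  have hn' : (0:ℝ) < n := by exact_mod_cast hn
  have hKn : (0:ℝ) < ((K - n : ℕ) : ℝ) := by
    have : 0 < K - n := Nat.sub_pos_of_lt hnK
    exact_mod_cast this
  have hw : Tendsto (fun m : ℝ => sip2Weight m K n) (𝓝[>] 0)
      (𝓝 (Real.Gamma n * Real.Gamma ((K - n : ℕ)) / (n.factorial * (K - n).factorial))) := by
    unfold sip2Weight
    exact ((tendsto_Gamma_shift hn').mul (tendsto_Gamma_shift hKn)).div_const _
  have hm : Tendsto (fun m : ℝ => m) (𝓝[>] (0:ℝ)) (𝓝 0) :=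
    tendsto_id.mono_left nhdsWithin_le_nhds
  simpa using hm.mul hw

noncomputable def sipL (K l : ℕ) : ℝ :=
  (if l = 0 then 2 * Real.Gamma K / K.factorial else 0) +
  (if l = K then 2 * Real.Gamma K / K.factorial else 0)

lemma tendsto_mw_sum (K : ℕ) (hK : 1 ≤ K) :
    Tendsto (fun m : ℝ => m * ∑ l ∈ Finset.range (K + 1), sip2Weight m K l) (𝓝[>] 0)
      (𝓝 (4 * Real.Gamma K / K.factorial)) := by
  have key : Tendsto (fun m : ℝ => ∑ l ∈ Finset.range (K + 1), m * sip2Weight m K l)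
      (𝓝[>] 0) (𝓝 (∑ l ∈ Finset.range (K + 1), sipL K l)) := by
    refine tendsto_finset_sum _ (fun l hl => ?_)
    rcases eq_or_ne l 0 with rfl | h0
    · have hK0 : (0:ℕ) ≠ K := by omega
      simpa [sipL, hK0] using tendsto_mw_zero K hK
    · rcases eq_or_ne l K with h | hlK
      · subst h
        simpa [sipL, h0] using tendsto_mw_K l hK
      · have hl' : l < K := by
          simp only [Finset.mem_range] at hl; omega
        simpa [sipL, h0, hlK] using tendsto_mw_interior K l (Nat.pos_of_ne_zero h0) hl'
  have hsum : ∑ l ∈ Finset.range (K + 1), sipL K l = 4 * Real.Gamma K / K.factorial := by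
    unfold sipL
    rw [Finset.sum_add_distrib, Finset.sum_ite_eq' (Finset.range (K+1)) 0,
      Finset.sum_ite_eq' (Finset.range (K+1)) K]
    simp [Finset.mem_range, Nat.lt_succ_iff, hK]
    ring
  rw [hsum] at key
  refine key.congr (fun m => ?_)
  rw [Finset.mul_sum]

lemma denom_pos (K : ℕ) (hK : 1 ≤ K) : 0 < 4 * Real.Gamma K / K.factorial := by
  have : (0:ℝ) < K := by exact_mod_cast hK
  have := Real.Gamma_pos_of_pos this
  positivity

lemma canonical_eq (K n : ℕ) {m : ℝ} (hm : 0 < m) :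
    sip2Canonical m K n =
      (m * sip2Weight m K n) / (m * ∑ l ∈ Finset.range (K + 1), sip2Weight m K l) := by
  rw [mul_div_mul_left _ _ hm.ne']
  rfl

/-- **Condensation on two sites as `m → 0`**: the canonical measure `μ_m^K` converges to
`(1/2)(δ_{(K,0)} + δ_{(0,K)})`, i.e. `μ_m^K(η₁=0) → 1/2`, `μ_m^K(η₁=K) → 1/2`, and
`μ_m^K(η₁=n) → 0` for `0 < n < K`. -/
theorem sip_two_site_condensation
    (K : ℕ) (hK : 1 ≤ K) :
    Tendsto (fun m : ℝ => sip2Canonical m K 0) (𝓝[>] 0) (𝓝 (1 / 2)) ∧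
    Tendsto (fun m : ℝ => sip2Canonical m K K) (𝓝[>] 0) (𝓝 (1 / 2)) ∧
    (∀ n : ℕ, 0 < n → n < K →
      Tendsto (fun m : ℝ => sip2Canonical m K n) (𝓝[>] 0) (𝓝 0)) := by
  have hKpos : (0:ℝ) < K := by exact_mod_cast hK
  have hGpos := Real.Gamma_pos_of_pos hKpos
  have hfac : (0:ℝ) < K.factorial := by exact_mod_cast K.factorial_pos
  have hden := denom_pos K hK
  have hsum := tendsto_mw_sum K hK
  have heq : ∀ n : ℕ, ∀ᶠ m in 𝓝[>] (0:ℝ), sip2Canonical m K n =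
      (m * sip2Weight m K n) / (m * ∑ l ∈ Finset.range (K + 1), sip2Weight m K l) := by
    intro n
    filter_upwards [self_mem_nhdsWithin] with m hm
    exact canonical_eq K n hm
  refine ⟨?_, ?_, ?_⟩
  · rw [tendsto_congr' (heq 0)]
    have := (tendsto_mw_zero K hK).div hsum hden.ne'
    simp only [Pi.div_def] at this
    convert this using 2
    field_simp
    ring
  · rw [tendsto_congr' (heq K)]
    have := (tendsto_mw_K K hK).div hsum hden.ne'
    simp only [Pi.div_def] at this
    convert this using 2
    field_simp
    ring
  · intro n hn hnK
    rw [tendsto_congr' (heq n)]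
    have := (tendsto_mw_interior K n hn hnK).div hsum hden.ne'
    simp only [Pi.div_def] at this
    simpa using this
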